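/- arXiv:2604.16512 — 7 statements merged into one kernel-verified Lean document; each statement's English description precedes it below -/
import Mathlib

section
/- Let d ≥ 1 and let φ : ℝᵈ → ℝ (with ℝᵈ modeled as EuclideanSpace ℝ (Fin d)). Let x ∈ ℝᵈ and assume that φ is C² on a neighborhood of x and that ‖gradient φ y‖ = 1 for all y in some neighborhood of x. Then the gradient vector field of φ is stationary along its own direction at x: the map t ↦ gradient φ (x + t • gradient φ x) from ℝ to ℝᵈ has derivative 0 at t = 0. -/
open Filter

/-- If `φ` is `C²` near `x` and solves the eikonal equation `‖∇φ‖ = 1` near `x`,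
then the gradient vector field of `φ` is stationary along its own direction at `x`. -/
theorem gradient_stationary_along_gradient_ray
    (d : ℕ) (hd : 1 ≤ d)
    (φ : EuclideanSpace ℝ (Fin d) → ℝ) (x : EuclideanSpace ℝ (Fin d))
    (hC2 : ContDiffAt ℝ 2 φ x)
    (heik : ∀ᶠ y in nhds x, ‖gradient φ y‖ = 1) :
    HasDerivAt (fun t : ℝ => gradient φ (x + t • gradient φ x))
      (0 : EuclideanSpace ℝ (Fin d)) 0 := by
  set ι : (EuclideanSpace ℝ (Fin d) →L[ℝ] ℝ) ≃ₗᵢ[ℝ] EuclideanSpace ℝ (Fin d) :=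
    (InnerProductSpace.toDual ℝ (EuclideanSpace ℝ (Fin d))).symm with hι
  -- second derivative
  have hf1 : ContDiffAt ℝ 1 (fderiv ℝ φ) x := hC2.fderiv_right (m := 1) (by norm_num)
  have hdf : DifferentiableAt ℝ (fderiv ℝ φ) x := hf1.differentiableAt one_ne_zero
  set f'' := fderiv ℝ (fderiv ℝ φ) x with hf''
  have hsymm : ∀ v w : EuclideanSpace ℝ (Fin d), f'' v w = f'' w v := by
    intro v w
    exact (hC2.isSymmSndFDerivAt (by norm_num)) v w
  -- gradient has fderiv ι ∘ f'' at x
  set D := (ι.toContinuousLinearEquiv.toContinuousLinearMap).comp f'' with hD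
  have hg : HasFDerivAt (gradient φ) D x := by
    have : HasFDerivAt (fun y => ι (fderiv ℝ φ y)) D x :=
      ι.toContinuousLinearEquiv.toContinuousLinearMap.hasFDerivAt.comp x hdf.hasFDerivAt
    exact this
  -- differentiate the eikonal equation
  have heik2 : (fun y => (inner ℝ (gradient φ y) (gradient φ y) : ℝ)) =ᶠ[nhds x]
      fun _ => 1 := by
    filter_upwards [heik] with y hy
    rw [real_inner_self_eq_norm_sq, hy]; norm_num
  have hinner : HasFDerivAt (fun y => (inner ℝ (gradient φ y) (gradient φ y) : ℝ))
      ((fderivInnerCLM ℝ (gradient φ x, gradient φ x)).comp (D.prod D)) x :=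
    hg.inner ℝ hg
  have hzero : HasFDerivAt (fun y => (inner ℝ (gradient φ y) (gradient φ y) : ℝ))
      (0 : EuclideanSpace ℝ (Fin d) →L[ℝ] ℝ) x :=
    (hasFDerivAt_const (1 : ℝ) x).congr_of_eventuallyEq heik2
  have hDeq : ((fderivInnerCLM ℝ (gradient φ x, gradient φ x)).comp (D.prod D)) =
      (0 : EuclideanSpace ℝ (Fin d) →L[ℝ] ℝ) := hinner.unique hzero
  -- hence ⟪D v, g x⟫ = 0 for all v
  have hperp : ∀ v : EuclideanSpace ℝ (Fin d), (inner ℝ (D v) (gradient φ x) : ℝ) = 0 := by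
    intro v
    have h0 := congrFun (congrArg (fun (L : EuclideanSpace ℝ (Fin d) →L[ℝ] ℝ) =>
      (L : EuclideanSpace ℝ (Fin d) → ℝ)) hDeq) v
    simp only [ContinuousLinearMap.comp_apply, ContinuousLinearMap.prod_apply,
      fderivInnerCLM_apply, ContinuousLinearMap.zero_apply] at h0
    have hsym := real_inner_comm (gradient φ x) (D v)
    linarith [h0, hsym]
  -- rewrite ⟪D v, g x⟫ = f'' v (g x)
  have hkey : ∀ v : EuclideanSpace ℝ (Fin d), f'' v (gradient φ x) = 0 := by
    intro v
    have h1 : (inner ℝ (D v) (gradient φ x) : ℝ) = f'' v (gradient φ x) := by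
      simp only [hD, ContinuousLinearMap.comp_apply,
        ContinuousLinearEquiv.coe_coe, LinearIsometryEquiv.coe_toContinuousLinearEquiv, hι]
      exact InnerProductSpace.toDual_symm_apply
    rw [← h1]; exact hperp v
  have hDg : D (gradient φ x) = 0 := by
    have h2 : f'' (gradient φ x) = 0 := by
      ext v
      rw [ContinuousLinearMap.zero_apply, ← hsymm v (gradient φ x)]
      exact hkey v
    simp only [hD, ContinuousLinearMap.comp_apply, h2]
    simp
  -- finish: compose with the line
  have hline : HasDerivAt (fun t : ℝ => x + t • gradient φ x) (gradient φ x) 0 := by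
    simpa using ((hasDerivAt_id (0 : ℝ)).smul_const (gradient φ x)).const_add x
  have hgx' : HasFDerivAt (gradient φ) D ((fun t : ℝ => x + t • gradient φ x) 0) := by
    simpa using hg
  have hcomp := hgx'.comp_hasDerivAt (0 : ℝ) hline
  rw [hDg] at hcomp
  exact hcomp
end

section
/- Let d ≥ 1, let S ⊆ ℝᵈ be a nonempty closed set, and let x ∈ ℝᵈ with x ∉ S. If the distance function f : ℝᵈ → ℝ, f(y) = Metric.infDist y S, is differentiable at x, then ‖fderiv ℝ f x‖ = 1. -/
/-- At any point of differentiability outside a nonempty closed set `S`,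
the distance function to `S` has derivative of norm one (eikonal equation). -/
theorem norm_fderiv_infDist_eq_one
    (d : ℕ) (hd : 1 ≤ d)
    (S : Set (EuclideanSpace ℝ (Fin d))) (hS : S.Nonempty) (hScl : IsClosed S)
    (x : EuclideanSpace ℝ (Fin d)) (hx : x ∉ S)
    (hdiff : DifferentiableAt ℝ (fun y => Metric.infDist y S) x) :
    ‖fderiv ℝ (fun y => Metric.infDist y S) x‖ = 1 := by
  set f : EuclideanSpace ℝ (Fin d) → ℝ := fun y => Metric.infDist y S with hf
  set L := fderiv ℝ f x with hL
  have hderiv : HasFDerivAt f L x := hdiff.hasFDerivAt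
  -- upper bound
  have hlip : LipschitzWith 1 f := Metric.lipschitz_infDist_pt S
  have hupper : ‖L‖ ≤ 1 := by
    simpa using hderiv.le_of_lipschitz hlip
  -- lower bound
  obtain ⟨z, hzS, hzd⟩ := hScl.exists_infDist_eq_dist hS x
  set D : ℝ := Metric.infDist x S with hD
  have hDpos : 0 < D := (hScl.notMem_iff_infDist_pos hS).1 hx
  have hzx : z ≠ x := by
    rintro rfl
    exact hx hzS
  set u : EuclideanSpace ℝ (Fin d) := D⁻¹ • (z - x) with hu
  have hxz : ‖z - x‖ = D := by
    rw [hzd, dist_eq_norm, ← norm_neg]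
    simp
  have hunorm : ‖u‖ = 1 := by
    rw [hu, norm_smul, hxz, norm_inv, Real.norm_eq_abs, abs_of_pos hDpos,
      inv_mul_cancel₀ hDpos.ne']
  -- f (x + t • u) = D - t for t ∈ [0, D]
  have key : ∀ t : ℝ, 0 ≤ t → t ≤ D → f (x + t • u) = D - t := by
    intro t ht htD
    have hle : f (x + t • u) ≤ D - t := by
      have : f (x + t • u) ≤ dist (x + t • u) z := Metric.infDist_le_dist_of_mem hzS
      refine this.trans_eq ?_
      rw [dist_eq_norm]
      have : x + t • u - z = (t / D - 1) • (z - x) := by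
        rw [hu, smul_smul]
        module
      rw [this, norm_smul, hxz, Real.norm_eq_abs, abs_of_nonpos (by
        rw [sub_nonpos, div_le_one hDpos]; exact htD)]
      field_simp
      ring
    have hge : D - t ≤ f (x + t • u) := by
      have h1 : D ≤ f (x + t • u) + dist x (x + t • u) :=
        Metric.infDist_le_infDist_add_dist
      have h2 : dist x (x + t • u) = t := by
        rw [dist_eq_norm]
        simp [norm_smul, hunorm, abs_of_nonneg ht]
      linarith
    linarith
  -- derivative of g t = f (x + t • u) at 0 within Ici 0 equals -1 and L u
  have hline : HasDerivAt (fun t : ℝ => x + t • u) u 0 := by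
    simpa using ((hasDerivAt_id (0:ℝ)).smul_const u).const_add x
  have hg : HasDerivAt (fun t : ℝ => f (x + t • u)) (L u) 0 := by
    have hderiv0 : HasFDerivAt f L ((fun t : ℝ => x + t • u) 0) := by
      simpa using hderiv
    exact hderiv0.comp_hasDerivAt 0 hline
  have hg' : HasDerivWithinAt (fun t : ℝ => f (x + t • u)) (L u) (Set.Ici 0) 0 :=
    hg.hasDerivWithinAt
  have haff : HasDerivWithinAt (fun t : ℝ => D - t) (-1 : ℝ) (Set.Ici 0) 0 := by
    simpa using ((hasDerivAt_id (0:ℝ)).const_sub D).hasDerivWithinAt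
  have heq : (fun t : ℝ => f (x + t • u)) =ᶠ[nhdsWithin 0 (Set.Ici 0)]
      (fun t : ℝ => D - t) := by
    filter_upwards [Filter.inter_mem self_mem_nhdsWithin
      (nhdsWithin_le_nhds (Metric.ball_mem_nhds (0:ℝ) hDpos))] with t ht
    exact key t ht.1 (le_of_lt (lt_of_abs_lt (by simpa [Real.dist_eq] using ht.2)))
  have hg'' : HasDerivWithinAt (fun t : ℝ => D - t) (L u) (Set.Ici 0) 0 := by
    refine hg'.congr_of_eventuallyEq heq.symm ?_
    simpa using key 0 le_rfl hDpos.le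
  have hLu : L u = -1 :=
    ((uniqueDiffOn_Ici (0:ℝ)) 0 Set.self_mem_Ici).eq_deriv _ hg'' haff
  have hlower : 1 ≤ ‖L‖ := by
    have := L.le_opNorm u
    rw [hLu, hunorm] at this
    simpa using this
  linarith
end

section
/- Let d ≥ 1 and let ω ⊆ ℝᵈ be a bounded open set with ω nonempty, and set S = frontier ω. Assume the Lebesgue measure of S is zero. Define the signed distance function φ : ℝᵈ → ℝ by φ(x) = −(Metric.infDist x S) if x ∈ ω and φ(x) = Metric.infDist x S otherwise. Then for Lebesgue-almost every x ∈ ℝᵈ, φ is differentiable at x and ‖fderiv ℝ φ x‖ = 1. -/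
open MeasureTheory

/-- If `S` is compact nonempty and `x ∉ S`, and the distance function to `S` is
differentiable at `x`, then its derivative has norm one. -/
lemma norm_fderiv_infDist_eq_one_s5 {E : Type*} [NormedAddCommGroup E] [NormedSpace ℝ E]
    {S : Set E} (hSc : IsCompact S) (hSne : S.Nonempty) {x : E} (hx : x ∉ S)
    (hdf : DifferentiableAt ℝ (fun y => Metric.infDist y S) x) :
    ‖fderiv ℝ (fun y => Metric.infDist y S) x‖ = 1 := by
  set f : E → ℝ := fun y => Metric.infDist y S with hfdef
  have hlip : LipschitzWith 1 f := Metric.lipschitz_infDist_pt S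
  set L := fderiv ℝ f x with hL
  have hF : HasFDerivAt f L x := hdf.hasFDerivAt
  set r : ℝ := Metric.infDist x S with hrdef
  have hr : 0 < r := (hSc.isClosed.notMem_iff_infDist_pos hSne).1 hx
  obtain ⟨z, hz, hzd⟩ := hSc.exists_infDist_eq_dist hSne x
  set v : E := z - x with hvdef
  have hvnorm : ‖v‖ = r := by
    rw [hvdef, hrdef, hzd, dist_eq_norm, norm_sub_rev]
  -- derivative of f along the line t ↦ x + t • v
  have hline : HasDerivAt (fun t : ℝ => f (x + t • v)) (L v) 0 := by
    have h1 : HasDerivAt (fun t : ℝ => x + t • v) v 0 := by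
      simpa using ((hasDerivAt_id (0 : ℝ)).smul_const v).const_add x
    have hF0 : HasFDerivAt f L ((fun t : ℝ => x + t • v) 0) := by simpa using hF
    exact hF0.comp_hasDerivAt 0 h1
  -- on (0,1], f (x + t • v) = (1 - t) * r
  have hval : ∀ t ∈ Set.Ioc (0:ℝ) 1, f (x + t • v) = (1 - t) * r := by
    intro t ht
    have hupper : f (x + t • v) ≤ (1 - t) * r := by
      have : f (x + t • v) ≤ dist (x + t • v) z := Metric.infDist_le_dist_of_mem hz
      refine this.trans_eq ?_
      rw [dist_eq_norm]
      have : x + t • v - z = -((1 - t) • v) := by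
        rw [hvdef]; module
      rw [this, norm_neg, norm_smul, Real.norm_eq_abs, abs_of_nonneg (by linarith [ht.2]),
        hvnorm]
    have hlower : (1 - t) * r ≤ f (x + t • v) := by
      have h2 : f x - f (x + t • v) ≤ dist x (x + t • v) := by
        have := hlip.dist_le_mul x (x + t • v)
        rw [NNReal.coe_one, one_mul, Real.dist_eq] at this
        exact (le_abs_self _).trans this
      have h3 : dist x (x + t • v) = t * r := by
        rw [dist_eq_norm]
        have : x - (x + t • v) = -(t • v) := by module
        rw [this, norm_neg, norm_smul, Real.norm_eq_abs, abs_of_pos ht.1, hvnorm]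
      have hfx : f x = r := rfl
      rw [h3, hfx] at h2
      linarith
    linarith
  -- hence L v = -r
  have hLv : L v = -r := by
    have hslope : Filter.Tendsto (slope (fun t : ℝ => f (x + t • v)) 0) (nhdsWithin 0 {(0:ℝ)}ᶜ)
        (nhds (L v)) := hasDerivAt_iff_tendsto_slope.1 hline
    have hmono : nhdsWithin (0:ℝ) (Set.Ioi 0) ≤ nhdsWithin 0 {(0:ℝ)}ᶜ :=
      nhdsWithin_mono 0 (fun t ht => ne_of_gt ht)
    have h1 : Filter.Tendsto (slope (fun t : ℝ => f (x + t • v)) 0) (nhdsWithin 0 (Set.Ioi 0))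
        (nhds (L v)) := hslope.mono_left hmono
    have h2 : slope (fun t : ℝ => f (x + t • v)) 0 =ᶠ[nhdsWithin 0 (Set.Ioi 0)]
        fun _ => -r := by
      filter_upwards [Ioc_mem_nhdsGT_of_mem (Set.mem_Ico.mpr ⟨le_refl 0, zero_lt_one⟩)]
        with t ht
      have hfx : f (x + (0:ℝ) • v) = r := by simp [hfdef, hrdef]
      have htne : t ≠ 0 := ne_of_gt ht.1
      rw [slope_def_field, hval t ht, hfx]
      field_simp
      ring
    have h3 : Filter.Tendsto (fun _ : ℝ => -r) (nhdsWithin 0 (Set.Ioi 0)) (nhds (L v)) :=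
      h1.congr' h2
    exact tendsto_nhds_unique h3 tendsto_const_nhds
  -- conclude
  have hub : ‖L‖ ≤ 1 := by simpa using hF.le_of_lipschitz hlip
  have hlb : 1 ≤ ‖L‖ := by
    have := L.le_opNorm v
    rw [hLv, norm_neg, Real.norm_eq_abs, abs_of_pos hr, hvnorm] at this
    nlinarith
  linarith

/-- The signed distance function to the boundary of a bounded nonempty open set whose
boundary has Lebesgue measure zero is differentiable almost everywhere and solves the
eikonal equation `‖∇φ‖ = 1` almost everywhere. -/
theorem signedDist_ae_differentiable_eikonal
    (d : ℕ) (hd : 1 ≤ d)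
    (ω : Set (EuclideanSpace ℝ (Fin d))) (hω : IsOpen ω) (hne : ω.Nonempty)
    (hbd : Bornology.IsBounded ω)
    (hS : volume (frontier ω) = 0)
    (φ : EuclideanSpace ℝ (Fin d) → ℝ)
    (hφin : ∀ x ∈ ω, φ x = -(Metric.infDist x (frontier ω)))
    (hφout : ∀ x ∉ ω, φ x = Metric.infDist x (frontier ω)) :
    ∀ᵐ x : EuclideanSpace ℝ (Fin d) ∂volume,
      DifferentiableAt ℝ φ x ∧ ‖fderiv ℝ φ x‖ = 1 := by
  haveI : Nonempty (Fin d) := ⟨⟨0, hd⟩⟩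
  haveI : Nontrivial (EuclideanSpace ℝ (Fin d)) := inferInstance
  set S := frontier ω with hSdef
  set f : EuclideanSpace ℝ (Fin d) → ℝ := fun y => Metric.infDist y S with hfdef
  have hSne : S.Nonempty := by
    by_contra h
    rw [Set.not_nonempty_iff_eq_empty] at h
    have hclopen : IsClopen ω := isClopen_iff_frontier_eq_empty.2 h
    rcases isClopen_iff.1 hclopen with h1 | h1
    · exact hne.ne_empty h1
    · rw [h1] at hbd
      exact NormedSpace.unbounded_univ ℝ _ hbd
  have hScompact : IsCompact S := by
    have : Bornology.IsBounded S := hbd.closure.subset frontier_subset_closure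
    exact Metric.isCompact_of_isClosed_isBounded isClosed_frontier this
  have hlip : LipschitzWith 1 f := Metric.lipschitz_infDist_pt S
  have hae : ∀ᵐ x : EuclideanSpace ℝ (Fin d) ∂volume, DifferentiableAt ℝ f x :=
    hlip.ae_differentiableAt
  have hSc : ∀ᵐ x : EuclideanSpace ℝ (Fin d) ∂volume, x ∉ S := by
    rw [ae_iff]; simpa using hS
  filter_upwards [hae, hSc] with x hdf hxS
  have hnorm : ‖fderiv ℝ f x‖ = 1 := norm_fderiv_infDist_eq_one_s5 hScompact hSne hxS hdf
  by_cases hx : x ∈ ω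
  · -- near x, φ = -f
    have heq : φ =ᶠ[nhds x] fun y => -f y := by
      filter_upwards [hω.mem_nhds hx] with y hy
      exact hφin y hy
    have hdg : DifferentiableAt ℝ (fun y => -f y) x := hdf.neg
    have hdφ : DifferentiableAt ℝ φ x := hdg.congr_of_eventuallyEq heq
    refine ⟨hdφ, ?_⟩
    rw [heq.fderiv_eq, fderiv_fun_neg, norm_neg, hnorm]
  · -- x ∉ closure ω, near x, φ = f
    have hxcl : x ∉ closure ω := by
      rw [closure_eq_self_union_frontier ω]
      rintro (h | h)
      exacts [hx h, hxS h]
    have hopen : IsOpen (closure ω)ᶜ := isClosed_closure.isOpen_compl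
    have heq : φ =ᶠ[nhds x] f := by
      filter_upwards [hopen.mem_nhds hxcl] with y hy
      exact hφout y (fun h => hy (subset_closure h))
    have hdφ : DifferentiableAt ℝ φ x := hdf.congr_of_eventuallyEq heq
    exact ⟨hdφ, by rw [heq.fderiv_eq, hnorm]⟩
end

section
/- Let d ≥ 1, let S ⊆ ℝᵈ be a nonempty closed set, let x ∈ ℝᵈ with x ∉ S, and let p ∈ S be a nearest point of x in S, i.e. ‖x − p‖ = Metric.infDist x S. If the distance function f : ℝᵈ → ℝ, f(y) = Metric.infDist y S, is differentiable at x, then its gradient at x equals the unit vector pointing from p to x: gradient f x = (‖x − p‖)⁻¹ • (x − p). In particular, the nearest point p is unique. -/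
open Metric

theorem aux_grad
    (d : ℕ)
    (S : Set (EuclideanSpace ℝ (Fin d)))
    (x : EuclideanSpace ℝ (Fin d)) (hx : x ∉ S)
    (p : EuclideanSpace ℝ (Fin d)) (hp : p ∈ S)
    (hnear : ‖x - p‖ = Metric.infDist x S)
    (hdiff : DifferentiableAt ℝ (fun y => Metric.infDist y S) x) :
    gradient (fun y => Metric.infDist y S) x = (‖x - p‖)⁻¹ • (x - p) := by
  set f : EuclideanSpace ℝ (Fin d) → ℝ := fun y => Metric.infDist y S with hf
  set g := gradient f x with hg
  have hxp : x - p ≠ 0 := sub_ne_zero.2 (by rintro rfl; exact hx hp)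
  have hxppos : (0:ℝ) < ‖x - p‖ := norm_pos_iff.2 hxp
  have hgrad : HasGradientAt f g x := hdiff.hasGradientAt
  have hF : HasFDerivAt f ((InnerProductSpace.toDual ℝ _) g) x :=
    hasGradientAt_iff_hasFDerivAt.1 hgrad
  -- Lipschitz bound on the gradient
  have hlip : LipschitzWith 1 f := lipschitz_infDist_pt S
  have hgle : ‖g‖ ≤ 1 := by
    have := hF.le_of_lipschitz hlip
    simpa using this
  -- directional derivative along v = p - x
  set v := p - x with hv
  have hcurve : HasDerivAt (fun t : ℝ => x + t • v) v 0 := by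
    simpa using ((hasDerivAt_id (0:ℝ)).smul_const v).const_add x
  have hF0 : HasFDerivAt f ((InnerProductSpace.toDual ℝ _) g) (x + (0:ℝ) • v) := by
    simpa using hF
  have hφ : HasDerivAt (fun t : ℝ => f (x + t • v)) (inner ℝ g v : ℝ) 0 := by
    have := hF0.comp_hasDerivAt (0:ℝ) hcurve
    simp only [InnerProductSpace.toDual_apply_apply] at this; exact this
  -- slope bound
  have hslope : ∀ t ∈ Set.Ioo (0:ℝ) 1,
      slope (fun t : ℝ => f (x + t • v)) 0 t ≤ -‖x - p‖ := by
    intro t ht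
    have h1 : f (x + t • v) ≤ (1 - t) * ‖x - p‖ := by
      have hle : f (x + t • v) ≤ dist (x + t • v) p := infDist_le_dist_of_mem hp
      have heq : dist (x + t • v) p = (1 - t) * ‖x - p‖ := by
        rw [dist_eq_norm]
        have : x + t • v - p = (1 - t) • (x - p) := by
          simp [hv, sub_smul, smul_sub]; abel
        rw [this, norm_smul]
        simp [abs_of_nonneg (by linarith [ht.2] : (0:ℝ) ≤ 1 - t)]
      linarith [heq ▸ hle]
    have h0 : f (x + (0:ℝ) • v) = ‖x - p‖ := by simp [hf, ← hnear]
    rw [slope_def_field, sub_zero, div_le_iff₀ ht.1]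
    nlinarith [h0, h1]
  have hkey : (inner ℝ g v : ℝ) ≤ -‖x - p‖ := by
    have htend := hasDerivAt_iff_tendsto_slope.1 hφ
    have htend' : Filter.Tendsto (slope (fun t : ℝ => f (x + t • v)) 0)
        (nhdsWithin 0 (Set.Ioi (0:ℝ))) (nhds (inner ℝ g v : ℝ)) :=
      htend.mono_left (nhdsWithin_mono _ (by intro t ht; exact ne_of_gt ht))
    refine le_of_tendsto htend' ?_
    filter_upwards [Ioo_mem_nhdsGT_of_mem (by constructor <;> norm_num :
      (0:ℝ) ∈ Set.Ico 0 1)] with t ht using hslope t ht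
  have hinner : ‖x - p‖ ≤ (inner ℝ g (x - p) : ℝ) := by
    have : (inner ℝ g (x - p) : ℝ) = -(inner ℝ g v : ℝ) := by
      rw [hv, ← inner_neg_right]; congr 1; abel
    linarith [hkey, this]
  have hCS : (inner ℝ g (x - p) : ℝ) ≤ ‖g‖ * ‖x - p‖ := real_inner_le_norm g (x - p)
  have hgn : ‖g‖ = 1 := by
    nlinarith [hinner, hCS, hgle, hxppos]
  have heq : (inner ℝ g (x - p) : ℝ) = ‖g‖ * ‖x - p‖ := by
    rw [hgn, one_mul]
    exact le_antisymm (by simpa [hgn] using hCS) hinner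
  have := inner_eq_norm_mul_iff_real.1 heq
  rw [hgn, one_smul] at this
  rw [eq_inv_smul_iff₀ (ne_of_gt hxppos)]
  exact this

/-- If the distance function to a nonempty closed set `S` is differentiable at
`x ∉ S`, and `p ∈ S` is a nearest point of `x` in `S`, then the gradient of the
distance function at `x` is the unit vector pointing from `p` to `x`; in particular,
the nearest point is unique. -/
theorem gradient_infDist_eq_unit_vector
    (d : ℕ) (hd : 1 ≤ d)
    (S : Set (EuclideanSpace ℝ (Fin d))) (hS : S.Nonempty) (hScl : IsClosed S)
    (x : EuclideanSpace ℝ (Fin d)) (hx : x ∉ S)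
    (p : EuclideanSpace ℝ (Fin d)) (hp : p ∈ S)
    (hnear : ‖x - p‖ = Metric.infDist x S)
    (hdiff : DifferentiableAt ℝ (fun y => Metric.infDist y S) x) :
    gradient (fun y => Metric.infDist y S) x = (‖x - p‖)⁻¹ • (x - p) ∧
      ∀ q ∈ S, ‖x - q‖ = Metric.infDist x S → q = p := by
  have hgp := aux_grad d S x hx p hp hnear hdiff
  refine ⟨hgp, fun q hq hnq => ?_⟩
  have hgq := aux_grad d S x hx q hq hnq hdiff
  have hnorm : ‖x - q‖ = ‖x - p‖ := by rw [hnq, hnear]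
  rw [hgp, hnorm] at hgq
  have hpos : (0:ℝ) < ‖x - p‖ :=
    norm_pos_iff.2 (sub_ne_zero.2 (by rintro rfl; exact hx hp))
  have hxpq : (x - q) = (x - p) := by
    exact smul_right_injective (EuclideanSpace ℝ (Fin d))
      (inv_ne_zero (ne_of_gt hpos)) hgq.symm
  rw [sub_right_inj] at hxpq; exact hxpq
end

section
/- Let d ≥ 1, let S ⊆ ℝᵈ be a nonempty closed set, and let x ∈ ℝᵈ with x ∉ S. If there exist two distinct points p, q ∈ S with ‖x − p‖ = ‖x − q‖ = Metric.infDist x S, then the distance function f : ℝᵈ → ℝ, f(y) = Metric.infDist y S, is not differentiable at x. -/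
open Metric

/-- Directional derivative bound: at a nearest point direction the derivative is ≤ -r. -/
lemma fderiv_infDist_nearest_le
    {E : Type*} [NormedAddCommGroup E] [NormedSpace ℝ E]
    (S : Set E) (x p : E) (hp : p ∈ S)
    (hnear : ‖x - p‖ = Metric.infDist x S)
    (h : DifferentiableAt ℝ (fun y => Metric.infDist y S) x) :
    (fderiv ℝ (fun y => Metric.infDist y S) x) (p - x) ≤ -‖x - p‖ := by
  set f : E → ℝ := fun y => Metric.infDist y S
  set L := fderiv ℝ f x
  set v := p - x
  -- φ t = f (x + t • v) has derivative L v at 0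
  have hline : HasDerivAt (fun t : ℝ => x + t • v) v 0 := by
    simpa using ((hasDerivAt_id (0:ℝ)).smul_const v).const_add x
  have hφ : HasDerivAt (fun t : ℝ => f (x + t • v)) (L v) 0 := by
    have hfd : HasFDerivAt f L (x + (0:ℝ) • v) := by simpa using h.hasFDerivAt
    exact hfd.comp_hasDerivAt 0 hline
  have htend := hφ.tendsto_slope_zero_right
  refine le_of_tendsto htend ?_
  filter_upwards [Ioo_mem_nhdsGT_of_mem (by norm_num : (0:ℝ) ∈ Set.Ico 0 1)]
    with t ht
  obtain ⟨ht0, ht1⟩ := ht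
  rw [zero_add]
  have hx0 : f (x + (0:ℝ) • v) = ‖x - p‖ := by simp [f, hnear]
  have hub : f (x + t • v) ≤ (1 - t) * ‖x - p‖ := by
    have h1 : x + t • v - p = (1 - t) • (x - p) := by
      simp only [v]; module
    have := Metric.infDist_le_dist_of_mem (x := x + t • v) hp
    rw [dist_eq_norm, h1, norm_smul] at this
    simpa [abs_of_nonneg (by linarith : (0:ℝ) ≤ 1 - t)] using this
  have : t⁻¹ • (f (x + t • v) - f (x + (0:ℝ) • v)) ≤
      t⁻¹ * ((1 - t) * ‖x - p‖ - ‖x - p‖) := by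
    rw [hx0, smul_eq_mul]
    exact mul_le_mul_of_nonneg_left (by linarith) (by positivity)
  calc t⁻¹ • (f (x + t • v) - f (x + (0:ℝ) • v))
      ≤ t⁻¹ * ((1 - t) * ‖x - p‖ - ‖x - p‖) := this
    _ = -‖x - p‖ := by field_simp; ring

/-- If a point `x` outside a nonempty closed set `S` has two distinct nearest points
in `S`, then the distance function to `S` is not differentiable at `x`. -/
theorem not_differentiableAt_infDist_of_two_nearest_points
    (d : ℕ) (hd : 1 ≤ d)
    (S : Set (EuclideanSpace ℝ (Fin d))) (hS : S.Nonempty) (hScl : IsClosed S)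
    (x : EuclideanSpace ℝ (Fin d)) (hx : x ∉ S)
    (p q : EuclideanSpace ℝ (Fin d)) (hp : p ∈ S) (hq : q ∈ S) (hpq : p ≠ q)
    (hnearp : ‖x - p‖ = Metric.infDist x S)
    (hnearq : ‖x - q‖ = Metric.infDist x S) :
    ¬ DifferentiableAt ℝ (fun y => Metric.infDist y S) x := by
  intro h
  set f : EuclideanSpace ℝ (Fin d) → ℝ := fun y => Metric.infDist y S
  set L := fderiv ℝ f x
  set r := Metric.infDist x S with hr
  have hLp : L (p - x) ≤ -r := hnearp ▸ fderiv_infDist_nearest_le S x p hp hnearp h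
  have hLq : L (q - x) ≤ -r := hnearq ▸ fderiv_infDist_nearest_le S x q hq hnearq h
  have hLnorm : ‖L‖ ≤ 1 := by
    simpa using norm_fderiv_le_of_lipschitz ℝ (Metric.lipschitz_infDist_pt S) (x₀ := x)
  -- strict triangle inequality
  have hpx : p - x ≠ 0 := sub_ne_zero.mpr (fun e => hx (e ▸ hp))
  have hnormeq : ‖p - x‖ = ‖q - x‖ := by
    rw [← norm_neg (p - x), ← norm_neg (q - x)]
    simpa [neg_sub] using hnearp.trans hnearq.symm
  have hne : p - x ≠ q - x := fun e => hpq (by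
    have := congrArg (· + x) e; simpa using this)
  have hstrict : ‖(p - x) + (q - x)‖ < ‖p - x‖ + ‖q - x‖ :=
    norm_add_lt_of_not_sameRay ((not_sameRay_iff_of_norm_eq hnormeq).mpr hne)
  have hrp : ‖p - x‖ = r := by rw [← norm_neg (p - x)]; simpa [neg_sub] using hnearp
  have hrq : ‖q - x‖ = r := by rw [← norm_neg (q - x)]; simpa [neg_sub] using hnearq
  have hsum : L ((p - x) + (q - x)) ≤ -2 * r := by
    rw [map_add]; linarith
  have hlow : -(‖(p - x) + (q - x)‖) ≤ L ((p - x) + (q - x)) := by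
    have h1 : |L ((p - x) + (q - x))| ≤ ‖(p - x) + (q - x)‖ := by
      calc |L ((p - x) + (q - x))| = ‖L ((p - x) + (q - x))‖ := (Real.norm_eq_abs _).symm
        _ ≤ ‖L‖ * ‖(p - x) + (q - x)‖ := L.le_opNorm _
        _ ≤ 1 * ‖(p - x) + (q - x)‖ :=
            mul_le_mul_of_nonneg_right hLnorm (norm_nonneg _)
        _ = ‖(p - x) + (q - x)‖ := one_mul _
    exact (abs_le.mp h1).1
  rw [hrp, hrq] at hstrict
  linarith
end

section
/- Let ε > 0 and b ≥ 0, and define v : ℝ → ℝ by v(s) = 0 if |s| ≤ b and v(s) = 1 − exp((b − |s|)/(2ε)) if |s| > b. Then the one-dimensional Ambrosio–Tortorelli energy of v satisfies ∫_{ℝ} ( ε * (v'(s))² + (1/(4ε)) * (v(s) − 1)² ) ds = 1 + b/(2ε), where v'(s) denotes the derivative of v, which exists for all s with |s| ≠ b (namely v'(s) = sgn(s) * (1/(2ε)) * exp((b − |s|)/(2ε)) for |s| > b and v'(s) = 0 for |s| < b). In particular, if b = b_ε with b_ε/ε → 0 as ε → 0, the energy converges to 1. -/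
open MeasureTheory Set Filter Topology

lemma AT_exp_integrable (ε b : ℝ) (hε : 0 < ε) :
    IntegrableOn (fun t => Real.exp ((b - t) / ε)) (Ioi b) := by
  have h : (fun t : ℝ => Real.exp ((b - t) / ε)) =
      fun t => Real.exp (b / ε) * Real.exp (-(ε⁻¹) * t) := by
    funext t
    rw [← Real.exp_add]
    congr 1
    field_simp
    ring
  rw [h]
  exact (exp_neg_integrableOn_Ioi b (inv_pos.mpr hε)).const_mul _

lemma AT_exp_integral (ε b : ℝ) (hε : 0 < ε) :
    ∫ t in Ioi b, Real.exp ((b - t) / ε) = ε := by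
  have hderiv : ∀ x ∈ Ioi b, HasDerivAt (fun t : ℝ => -ε * Real.exp ((b - t) / ε))
      (Real.exp ((b - x) / ε)) x := by
    intro x _
    have h1 : HasDerivAt (fun t : ℝ => (b - t) / ε) (-1 / ε) x :=
      ((hasDerivAt_id x).const_sub b).div_const ε
    have h2 := (h1.exp).const_mul (-ε)
    refine h2.congr_deriv ?_
    have hee : -ε * (-1 / ε) = 1 := by
      rw [neg_div, mul_neg, neg_mul, neg_neg, mul_one_div_cancel hε.ne']
    linear_combination (Real.exp ((b - x) / ε)) * hee
  have hcont : ContinuousWithinAt (fun t : ℝ => -ε * Real.exp ((b - t) / ε)) (Ici b) b :=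
    (Continuous.continuousWithinAt (by continuity))
  have htend : Tendsto (fun t : ℝ => -ε * Real.exp ((b - t) / ε)) atTop (𝓝 0) := by
    have h1 : Tendsto (fun t : ℝ => b - t) atTop atBot := by
      simpa [sub_eq_add_neg] using tendsto_atBot_add_const_left atTop b tendsto_neg_atTop_atBot
    have h2 : Tendsto (fun t : ℝ => (b - t) / ε) atTop atBot := h1.atBot_div_const hε
    have h3 := (Real.tendsto_exp_atBot.comp h2).const_mul (-ε)
    simpa using h3
  have := integral_Ioi_of_hasDerivAt_of_tendsto hcont hderiv (AT_exp_integrable ε b hε) htend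
  rw [this]
  simp

/-- The one-dimensional Ambrosio–Tortorelli energy of the optimal transition profile
`v(s) = 0` for `|s| ≤ b` and `v(s) = 1 - exp((b - |s|)/(2ε))` for `|s| > b` equals
`1 + b/(2ε)`; here `v' ` exists for all `|s| ≠ b` and is given by
`v'(s) = sgn(s) (1/(2ε)) exp((b - |s|)/(2ε))` for `|s| > b` and `v'(s) = 0` for `|s| < b`. -/
theorem ambrosioTortorelli_profile_energy
    (ε b : ℝ) (hε : 0 < ε) (hb : 0 ≤ b)
    (v dv : ℝ → ℝ)
    (hv : ∀ s, v s = if |s| ≤ b then 0 else 1 - Real.exp ((b - |s|) / (2 * ε)))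
    (hdv : ∀ s, dv s =
      if |s| < b then 0
      else if b < |s| then Real.sign s * (1 / (2 * ε)) * Real.exp ((b - |s|) / (2 * ε))
      else 0) :
    (∀ s : ℝ, |s| ≠ b → HasDerivAt v (dv s) s) ∧
    ∫ s : ℝ, (ε * (dv s) ^ 2 + (1 / (4 * ε)) * (v s - 1) ^ 2) = 1 + b / (2 * ε) := by
  constructor
  · intro s hs
    rcases lt_or_gt_of_ne hs with h | h
    · -- |s| < b : v is locally 0
      rw [hdv, if_pos h]
      have hmem : {t : ℝ | |t| < b} ∈ 𝓝 s :=
        (isOpen_lt continuous_abs continuous_const).mem_nhds h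
      exact (hasDerivAt_const s (0 : ℝ)).congr_of_eventuallyEq
        (by filter_upwards [hmem] with t ht; rw [hv, if_pos ht.le])
    · -- b < |s|
      have hs0 : s ≠ 0 := by
        intro h0
        rw [h0] at h
        simp at h
        exact absurd (h.trans_le hb) (lt_irrefl b)
      rcases hs0.lt_or_gt with hneg | hpos
      · -- s < 0, so |s| = -s and s < -b
        have hsb : s < -b := by
          have : b < -s := by rwa [abs_of_neg hneg] at h
          linarith
        have hw : HasDerivAt (fun t : ℝ => 1 - Real.exp ((b + t) / (2 * ε)))
            (-(1 / (2 * ε)) * Real.exp ((b + s) / (2 * ε))) s := by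
          have h1 : HasDerivAt (fun t : ℝ => (b + t) / (2 * ε)) (1 / (2 * ε)) s :=
            ((hasDerivAt_id s).const_add b).div_const (2 * ε)
          have h2 := (h1.exp).const_sub 1
          refine h2.congr_deriv ?_
          ring
        have hev : (fun t : ℝ => v t) =ᶠ[𝓝 s] fun t => 1 - Real.exp ((b + t) / (2 * ε)) := by
          filter_upwards [eventually_lt_nhds hsb] with t ht
          have ht0 : t < 0 := ht.trans_le (by linarith)
          have habs : ¬ |t| ≤ b := by rw [abs_of_neg ht0]; intro hc; linarith
          rw [hv, if_neg habs, abs_of_neg ht0]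
          ring_nf
        have := hw.congr_of_eventuallyEq hev
        refine this.congr_deriv ?_
        rw [hdv, if_neg (not_lt.mpr h.le), if_pos h, Real.sign_of_neg hneg,
          abs_of_neg hneg]
        ring_nf
      · -- 0 < s, so |s| = s and b < s
        have hsb : b < s := by rwa [abs_of_pos hpos] at h
        have hw : HasDerivAt (fun t : ℝ => 1 - Real.exp ((b - t) / (2 * ε)))
            ((1 / (2 * ε)) * Real.exp ((b - s) / (2 * ε))) s := by
          have h1 : HasDerivAt (fun t : ℝ => (b - t) / (2 * ε)) (-1 / (2 * ε)) s :=
            ((hasDerivAt_id s).const_sub b).div_const (2 * ε)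
          have h2 := (h1.exp).const_sub 1
          refine h2.congr_deriv ?_
          ring
        have hev : (fun t : ℝ => v t) =ᶠ[𝓝 s] fun t => 1 - Real.exp ((b - t) / (2 * ε)) := by
          filter_upwards [eventually_gt_nhds hsb] with t ht
          have ht0 : 0 < t := lt_of_le_of_lt hb ht
          have habs : ¬ |t| ≤ b := by rw [abs_of_pos ht0]; intro hc; linarith
          rw [hv, if_neg habs, abs_of_pos ht0]
        have := hw.congr_of_eventuallyEq hev
        refine this.congr_deriv ?_
        rw [hdv, if_neg (not_lt.mpr h.le), if_pos h, Real.sign_of_pos hpos,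
          abs_of_pos hpos]
        ring
  · -- the integral
    set g : ℝ → ℝ := fun t => if t ≤ b then 1 / (4 * ε) else (1 / (2 * ε)) * Real.exp ((b - t) / ε)
      with hg
    have hfg : ∀ s : ℝ, ε * (dv s) ^ 2 + (1 / (4 * ε)) * (v s - 1) ^ 2 = g |s| := by
      intro s
      simp only [hv, hdv, hg]
      rcases lt_trichotomy (|s|) b with h | h | h
      · rw [if_pos h, if_pos h.le, if_pos h.le]
        ring
      · rw [if_neg (by rw [h]; exact lt_irrefl b), if_neg (by rw [h]; exact lt_irrefl b),
          if_pos h.le, if_pos h.le]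
        ring
      · have hs0 : s ≠ 0 := by
          intro h0; rw [h0] at h; simp at h; exact absurd (h.trans_le hb) (lt_irrefl b)
        have hsgn : Real.sign s ^ 2 = 1 := by
          rcases hs0.lt_or_gt with h' | h'
          · rw [Real.sign_of_neg h']; ring
          · rw [Real.sign_of_pos h']; ring
        have hE : Real.exp ((b - |s|) / (2 * ε)) ^ 2 = Real.exp ((b - |s|) / ε) := by
          rw [sq, ← Real.exp_add]
          congr 1
          field_simp
          ring
        rw [if_neg (not_lt.mpr h.le), if_pos h, if_neg (not_le.mpr h), if_neg (not_le.mpr h)]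
        have hexp : ε * (Real.sign s * (1 / (2 * ε)) * Real.exp ((b - |s|) / (2 * ε))) ^ 2 +
            1 / (4 * ε) * (1 - Real.exp ((b - |s|) / (2 * ε)) - 1) ^ 2 =
            (Real.sign s ^ 2 * (ε * (1 / (2 * ε)) ^ 2) + 1 / (4 * ε)) *
              Real.exp ((b - |s|) / (2 * ε)) ^ 2 := by ring
        rw [hexp, hsgn, hE]
        field_simp
        ring
    have hsplit : Ioc (0 : ℝ) b ∪ Ioi b = Ioi (0 : ℝ) := Ioc_union_Ioi_eq_Ioi hb
    have hint1 : IntegrableOn g (Ioc 0 b) := by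
      apply (integrableOn_const measure_Ioc_lt_top.ne).congr_fun
        (g := g) (f := fun _ => 1 / (4 * ε)) _ measurableSet_Ioc
      intro t ht
      rw [hg]
      simp only [if_pos ht.2]
    have hint2 : IntegrableOn g (Ioi b) := by
      have hbase : IntegrableOn (fun t => (1 / (2 * ε)) * Real.exp ((b - t) / ε)) (Ioi b) :=
        (AT_exp_integrable ε b hε).const_mul _
      apply hbase.congr_fun _ measurableSet_Ioi
      intro t ht
      rw [hg]
      simp only [if_neg (not_le.mpr (mem_Ioi.mp ht))]
    have heval1 : ∫ t in Ioc (0 : ℝ) b, g t = b / (4 * ε) := by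
      rw [setIntegral_congr_fun measurableSet_Ioc (g := fun _ => 1 / (4 * ε))
        (fun t ht => by rw [hg]; simp only [if_pos ht.2])]
      simp [Real.volume_Ioc, ENNReal.toReal_ofReal hb]
      rw [max_eq_left hb]
      ring
    have heval2 : ∫ t in Ioi b, g t = 1 / 2 := by
      rw [setIntegral_congr_fun measurableSet_Ioi
        (g := fun t => (1 / (2 * ε)) * Real.exp ((b - t) / ε))
        (fun t ht => by rw [hg]; simp only [if_neg (not_le.mpr (mem_Ioi.mp ht))])]
      rw [integral_const_mul, AT_exp_integral ε b hε]
      field_simp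
    calc ∫ s : ℝ, (ε * (dv s) ^ 2 + (1 / (4 * ε)) * (v s - 1) ^ 2)
        = ∫ s : ℝ, g |s| := by simp_rw [hfg]
      _ = 2 * ∫ t in Ioi (0 : ℝ), g t := integral_comp_abs
      _ = 2 * ((∫ t in Ioc (0 : ℝ) b, g t) + ∫ t in Ioi b, g t) := by
          rw [← setIntegral_union (Ioc_disjoint_Ioi le_rfl) measurableSet_Ioi hint1 hint2, hsplit]
      _ = 1 + b / (2 * ε) := by rw [heval1, heval2]; field_simp; ring
end

section
/- Let d ∈ {2, 3} and let Ω ⊆ ℝᵈ be a bounded measurable set equipped with Lebesgue measure. Let (vᵢ), v : Ω → ℝ with ‖vᵢ − v‖_{L⁶(Ω)} → 0, let (wᵢ), w : Ω → ℝᵈ with ‖wᵢ − w‖_{L⁶(Ω;ℝᵈ)} → 0, and let (Aᵢ), A : Ω → (ℝᵈ →L[ℝ] ℝᵈ) be matrix fields with each Aᵢ and A in L²(Ω), with supᵢ ‖Aᵢ‖_{L²} < ∞, such that Aᵢ converges to A weakly in L², i.e. ∫_Ω ⟪Aᵢ(x), B(x)⟫ dx → ∫_Ω ⟪A(x), B(x)⟫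 dx for every matrix field B ∈ L²(Ω) (with ⟪·,·⟫ the Frobenius inner product). Then the products vᵢ Aᵢ wᵢ converge to v A w weakly in L^{6/5}, i.e. for every g : Ω → ℝᵈ with g ∈ L⁶(Ω;ℝᵈ), one has ∫_Ω vᵢ(x) ⟨Aᵢ(x) (wᵢ(x)), g(x)⟩ dx → ∫_Ω v(x) ⟨A(x) (w(x)), g(x)⟩ dx. -/
open MeasureTheory Filter
open scoped ENNReal

/-- The Frobenius inner product of two linear maps on `ℝᵈ`,
`⟪A, B⟫ = ∑ⱼ ⟨A eⱼ, B eⱼ⟩ = tr(Aᵀ B)`. -/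
noncomputable def frobeniusInner {d : ℕ}
    (A B : EuclideanSpace ℝ (Fin d) →L[ℝ] EuclideanSpace ℝ (Fin d)) : ℝ :=
  ∑ j : Fin d, (inner ℝ (A (EuclideanSpace.single j 1)) (B (EuclideanSpace.single j 1)) : ℝ)

section Helpers

variable {α : Type*} [MeasurableSpace α] {μ : Measure α} {d : ℕ}

local notation "E" => EuclideanSpace ℝ (Fin d)

private lemma e1 : (1:ℝ≥0∞)/1 = 1/6 + 1/(6/5) := by
  have h2 : (1:ℝ≥0∞)/(6/5) ≠ ⊤ := by simp [one_div, ENNReal.inv_ne_top, ENNReal.div_eq_zero_iff]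
  have h3 : (1:ℝ≥0∞)/6 ≠ ⊤ := by simp [one_div, ENNReal.inv_ne_top]
  rw [← ENNReal.toReal_eq_toReal_iff' (by simp) (ENNReal.add_ne_top.mpr ⟨h3, h2⟩),
    ENNReal.toReal_add h3 h2]
  simp [ENNReal.toReal_div]
  norm_num

private lemma e2 : (1:ℝ≥0∞)/(6/5) = 1/(3/2) + 1/6 := by
  have h1 : (1:ℝ≥0∞)/(6/5) ≠ ⊤ := by simp [one_div, ENNReal.inv_ne_top, ENNReal.div_eq_zero_iff]
  have h2 : (1:ℝ≥0∞)/(3/2) ≠ ⊤ := by simp [one_div, ENNReal.inv_ne_top, ENNReal.div_eq_zero_iff]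
  have h3 : (1:ℝ≥0∞)/6 ≠ ⊤ := by simp [one_div, ENNReal.inv_ne_top]
  rw [← ENNReal.toReal_eq_toReal_iff' h1 (ENNReal.add_ne_top.mpr ⟨h2, h3⟩),
    ENNReal.toReal_add h2 h3]
  simp [ENNReal.toReal_div]
  norm_num

private lemma e3 : (1:ℝ≥0∞)/(3/2) = 1/2 + 1/6 := by
  have h1 : (1:ℝ≥0∞)/(3/2) ≠ ⊤ := by simp [one_div, ENNReal.inv_ne_top, ENNReal.div_eq_zero_iff]
  have h2 : (1:ℝ≥0∞)/2 ≠ ⊤ := by simp [one_div, ENNReal.inv_ne_top]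
  have h3 : (1:ℝ≥0∞)/6 ≠ ⊤ := by simp [one_div, ENNReal.inv_ne_top]
  rw [← ENNReal.toReal_eq_toReal_iff' h1 (ENNReal.add_ne_top.mpr ⟨h2, h3⟩),
    ENNReal.toReal_add h2 h3]
  simp [ENNReal.toReal_div]
  norm_num

private lemma e4 : (1:ℝ≥0∞)/2 = 1/6 + 1/3 := by
  have h1 : (1:ℝ≥0∞)/2 ≠ ⊤ := by simp [one_div, ENNReal.inv_ne_top]
  have h2 : (1:ℝ≥0∞)/6 ≠ ⊤ := by simp [one_div, ENNReal.inv_ne_top]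
  have h3 : (1:ℝ≥0∞)/3 ≠ ⊤ := by simp [one_div, ENNReal.inv_ne_top]
  rw [← ENNReal.toReal_eq_toReal_iff' h1 (ENNReal.add_ne_top.mpr ⟨h2, h3⟩),
    ENNReal.toReal_add h2 h3]
  simp [ENNReal.toReal_div]
  norm_num

private lemma e5 : (1:ℝ≥0∞)/3 = 1/6 + 1/6 := by
  have h2 : (1:ℝ≥0∞)/6 ≠ ⊤ := by simp [one_div, ENNReal.inv_ne_top]
  have h3 : (1:ℝ≥0∞)/3 ≠ ⊤ := by simp [one_div, ENNReal.inv_ne_top]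
  rw [← ENNReal.toReal_eq_toReal_iff' h3 (ENNReal.add_ne_top.mpr ⟨h2, h2⟩),
    ENNReal.toReal_add h2 h2]
  simp [ENNReal.toReal_div]
  norm_num

lemma frob_eq (M : E →L[ℝ] E) (c : ℝ) (u z : E) :
    frobeniusInner M (c • (innerSL ℝ u).smulRight z) = c * (inner ℝ (M u) z : ℝ) := by
  have hu : u = ∑ j : Fin d, u j • EuclideanSpace.single j 1 := by
    ext k
    simp [EuclideanSpace.single_apply, Pi.single_apply]
  unfold frobeniusInner
  conv_rhs => rw [hu]
  rw [map_sum, sum_inner, Finset.mul_sum]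
  refine Finset.sum_congr rfl fun j _ => ?_
  simp only [real_inner_smul_right, real_inner_smul_left, ContinuousLinearMap.smul_apply,
    ContinuousLinearMap.smulRight_apply, innerSL_apply_apply, ContinuousLinearMap.map_smul]
  simp [EuclideanSpace.inner_single_right]

lemma aesm_apply {A : α → E →L[ℝ] E} {w : α → E} (hA : AEStronglyMeasurable A μ)
    (hw : AEStronglyMeasurable w μ) : AEStronglyMeasurable (fun x => A x (w x)) μ :=
  (ContinuousLinearMap.apply ℝ E).flip.aestronglyMeasurable_comp₂ hA hw

lemma aesm_quad {v : α → ℝ} {A : α → E →L[ℝ] E} {w g : α → E}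
    (hv : AEStronglyMeasurable v μ) (hA : AEStronglyMeasurable A μ)
    (hw : AEStronglyMeasurable w μ) (hg : AEStronglyMeasurable g μ) :
    AEStronglyMeasurable (fun x => v x * (inner ℝ (A x (w x)) (g x) : ℝ)) μ :=
  hv.mul ((aesm_apply hA hw).inner hg)

lemma quad_bound {v : α → ℝ} {A : α → E →L[ℝ] E} {w g : α → E}
    (hv : AEStronglyMeasurable v μ) (hA : AEStronglyMeasurable A μ)
    (hw : AEStronglyMeasurable w μ) (hg : AEStronglyMeasurable g μ) :
    eLpNorm (fun x => v x * (inner ℝ (A x (w x)) (g x) : ℝ)) 1 μ ≤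
      eLpNorm v 6 μ * (eLpNorm A 2 μ * (eLpNorm w 6 μ * eLpNorm g 6 μ)) := by
  have hAw : AEStronglyMeasurable (fun x => A x (w x)) μ := aesm_apply hA hw
  have h1 : eLpNorm (fun x => A x (w x)) (3/2) μ ≤ eLpNorm A 2 μ * eLpNorm w 6 μ :=
    le_of_le_of_eq (eLpNorm_le_eLpNorm_mul_eLpNorm'_of_norm (p := 2) (q := 6) (r := 3/2) hA hw (fun M u => M u) 1
      (Eventually.of_forall fun x => (ContinuousLinearMap.le_opNorm _ _).trans_eq (by simp))
      (hpqr := ⟨by simpa only [one_div] using e3.symm⟩)) (by simp)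
  have h2 : eLpNorm (fun x => (inner ℝ (A x (w x)) (g x) : ℝ)) (6/5) μ ≤
      eLpNorm (fun x => A x (w x)) (3/2) μ * eLpNorm g 6 μ :=
    le_of_le_of_eq (eLpNorm_le_eLpNorm_mul_eLpNorm'_of_norm (p := 3/2) (q := 6) (r := 6/5) hAw hg (fun a b => (inner ℝ a b : ℝ)) 1
      (Eventually.of_forall fun x => (norm_inner_le_norm _ _).trans_eq (by simp))
      (hpqr := ⟨by simpa only [one_div] using e2.symm⟩)) (by simp)
  have h3 : eLpNorm (fun x => v x * (inner ℝ (A x (w x)) (g x) : ℝ)) 1 μ ≤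
      eLpNorm v 6 μ * eLpNorm (fun x => (inner ℝ (A x (w x)) (g x) : ℝ)) (6/5) μ :=
    le_of_le_of_eq (eLpNorm_le_eLpNorm_mul_eLpNorm'_of_norm (p := 6) (q := 6/5) (r := 1) hv (hAw.inner hg) (fun a b => a * b) 1
      (Eventually.of_forall fun x => (norm_mul _ _).le.trans_eq (by simp))
      (hpqr := ⟨by simpa only [one_div] using e1.symm⟩)) (by simp)
  calc eLpNorm (fun x => v x * (inner ℝ (A x (w x)) (g x) : ℝ)) 1 μ
      ≤ eLpNorm v 6 μ * eLpNorm (fun x => (inner ℝ (A x (w x)) (g x) : ℝ)) (6/5) μ := h3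
    _ ≤ eLpNorm v 6 μ * (eLpNorm (fun x => A x (w x)) (3/2) μ * eLpNorm g 6 μ) :=
        mul_le_mul' le_rfl h2
    _ ≤ eLpNorm v 6 μ * ((eLpNorm A 2 μ * eLpNorm w 6 μ) * eLpNorm g 6 μ) :=
        mul_le_mul' le_rfl (mul_le_mul' h1 le_rfl)
    _ = eLpNorm v 6 μ * (eLpNorm A 2 μ * (eLpNorm w 6 μ * eLpNorm g 6 μ)) := by ring

lemma integrable_quad {v : α → ℝ} {A : α → E →L[ℝ] E} {w g : α → E}
    (hv : MemLp v 6 μ) (hA : MemLp A 2 μ) (hw : MemLp w 6 μ) (hg : MemLp g 6 μ) :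
    Integrable (fun x => v x * (inner ℝ (A x (w x)) (g x) : ℝ)) μ := by
  rw [← memLp_one_iff_integrable]
  refine ⟨aesm_quad hv.1 hA.1 hw.1 hg.1, ?_⟩
  exact (quad_bound hv.1 hA.1 hw.1 hg.1).trans_lt
    (ENNReal.mul_lt_top hv.2 (ENNReal.mul_lt_top hA.2 (ENNReal.mul_lt_top hw.2 hg.2)))

lemma memLp_rankOne {v : α → ℝ} {w g : α → E}
    (hv : MemLp v 6 μ) (hw : MemLp w 6 μ) (hg : MemLp g 6 μ) :
    MemLp (fun x => v x • ((innerSL ℝ (w x)).smulRight (g x))) 2 μ := by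
  have hCm : AEStronglyMeasurable (fun x => (innerSL ℝ (w x)).smulRight (g x)) μ :=
    (ContinuousLinearMap.smulRightL ℝ E E).aestronglyMeasurable_comp₂
      ((innerSL ℝ).continuous.comp_aestronglyMeasurable hw.1) hg.1
  have hC : MemLp (fun x => (innerSL ℝ (w x)).smulRight (g x)) 3 μ := by
    refine ⟨hCm, ?_⟩
    have hb : eLpNorm (fun x => (innerSL ℝ (w x)).smulRight (g x)) 3 μ ≤
        eLpNorm w 6 μ * eLpNorm g 6 μ := by
      refine le_of_le_of_eq (eLpNorm_le_eLpNorm_mul_eLpNorm'_of_norm (p := 6) (q := 6) (r := 3) hw.1 hg.1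
        (fun u z => (innerSL ℝ u).smulRight z) 1
        (Eventually.of_forall fun x => ?_) (hpqr := ⟨by simpa only [one_div] using e5.symm⟩)) (by simp)
      rw [NNReal.coe_one, one_mul, ContinuousLinearMap.norm_smulRight_apply]
      gcongr
      exact innerSL_apply_norm ℝ (w x) ▸ le_rfl
    exact hb.trans_lt (ENNReal.mul_lt_top hw.2 hg.2)
  exact hC.smul hv (hpqr := ⟨by simpa only [one_div] using e4.symm⟩)

end Helpers
/-- If `vᵢ → v` strongly in `L⁶`, `wᵢ → w` strongly in `L⁶`, and the matrix fields
`Aᵢ → A` weakly in `L²` with `supᵢ ‖Aᵢ‖_{L²} < ∞`, then `vᵢ Aᵢ wᵢ → v A w`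
weakly in `L^{6/5}` on the bounded set `Ω ⊆ ℝᵈ`, `d ∈ {2,3}`. -/
theorem weak_limit_of_products
    (d : ℕ) (hd : d = 2 ∨ d = 3)
    (Ω : Set (EuclideanSpace ℝ (Fin d)))
    (hΩb : Bornology.IsBounded Ω) (hΩm : MeasurableSet Ω)
    (vi : ℕ → EuclideanSpace ℝ (Fin d) → ℝ) (v : EuclideanSpace ℝ (Fin d) → ℝ)
    (hvi : ∀ i, MemLp (vi i) 6 (volume.restrict Ω))
    (hv : MemLp v 6 (volume.restrict Ω))
    (hvconv : Tendsto (fun i => eLpNorm (fun x => vi i x - v x) 6 (volume.restrict Ω))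
      atTop (nhds 0))
    (wi : ℕ → EuclideanSpace ℝ (Fin d) → EuclideanSpace ℝ (Fin d))
    (w : EuclideanSpace ℝ (Fin d) → EuclideanSpace ℝ (Fin d))
    (hwi : ∀ i, MemLp (wi i) 6 (volume.restrict Ω))
    (hw : MemLp w 6 (volume.restrict Ω))
    (hwconv : Tendsto (fun i => eLpNorm (fun x => wi i x - w x) 6 (volume.restrict Ω))
      atTop (nhds 0))
    (Ai : ℕ → EuclideanSpace ℝ (Fin d) → (EuclideanSpace ℝ (Fin d) →L[ℝ] EuclideanSpace ℝ (Fin d)))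
    (A : EuclideanSpace ℝ (Fin d) → (EuclideanSpace ℝ (Fin d) →L[ℝ] EuclideanSpace ℝ (Fin d)))
    (hAi : ∀ i, MemLp (Ai i) 2 (volume.restrict Ω))
    (hA : MemLp A 2 (volume.restrict Ω))
    (hAbdd : (⨆ i, eLpNorm (Ai i) 2 (volume.restrict Ω)) < ⊤)
    (hAconv : ∀ B : EuclideanSpace ℝ (Fin d) →
        (EuclideanSpace ℝ (Fin d) →L[ℝ] EuclideanSpace ℝ (Fin d)),
      MemLp B 2 (volume.restrict Ω) →
      Tendsto (fun i => ∫ x, frobeniusInner (Ai i x) (B x) ∂(volume.restrict Ω))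
        atTop (nhds (∫ x, frobeniusInner (A x) (B x) ∂(volume.restrict Ω)))) :
    ∀ g : EuclideanSpace ℝ (Fin d) → EuclideanSpace ℝ (Fin d),
      MemLp g 6 (volume.restrict Ω) →
      Tendsto (fun i => ∫ x, vi i x * (inner ℝ (Ai i x (wi i x)) (g x) : ℝ) ∂(volume.restrict Ω))
        atTop (nhds (∫ x, v x * (inner ℝ (A x (w x)) (g x) : ℝ) ∂(volume.restrict Ω))) := by
  intro g hg
  set μ := volume.restrict Ω with hμ
  -- The weak-convergence part: ∫ v ⟨Aᵢ w, g⟩ → ∫ v ⟨A w, g⟩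
  have hB : MemLp (fun x => v x • ((innerSL ℝ (w x)).smulRight (g x))) 2 μ :=
    memLp_rankOne hv hw hg
  have hG : Tendsto (fun i => ∫ x, v x * (inner ℝ (Ai i x (w x)) (g x) : ℝ) ∂μ)
      atTop (nhds (∫ x, v x * (inner ℝ (A x (w x)) (g x) : ℝ) ∂μ)) := by
    have := hAconv _ hB
    simpa only [frob_eq] using this
  -- Notation for eLpNorms
  set S := ⨆ i, eLpNorm (Ai i) 2 μ with hSdef
  have hS : S ≠ ⊤ := hAbdd.ne
  have hSi : ∀ i, eLpNorm (Ai i) 2 μ ≤ S := fun i => le_iSup (fun i => eLpNorm (Ai i) 2 μ) i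
  set V := eLpNorm v 6 μ with hVdef
  set W := eLpNorm w 6 μ with hWdef
  set Gn := eLpNorm g 6 μ with hGdef
  have hV : V ≠ ⊤ := hv.2.ne
  have hW : W ≠ ⊤ := hw.2.ne
  have hGn : Gn ≠ ⊤ := hg.2.ne
  set ε := fun i => eLpNorm (fun x => vi i x - v x) 6 μ with hεdef
  set δ := fun i => eLpNorm (fun x => wi i x - w x) 6 μ with hδdef
  have hεfin : ∀ i, ε i ≠ ⊤ := fun i => ((hvi i).sub hv).2.ne
  have hδfin : ∀ i, δ i ≠ ⊤ := fun i => ((hwi i).sub hw).2.ne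
  set R := fun i => ε i * (S * ((δ i + W) * Gn)) + V * (S * (δ i * Gn)) with hRdef
  have hRfin : ∀ i, R i ≠ ⊤ := by
    intro i
    refine ENNReal.add_ne_top.mpr ⟨?_, ?_⟩
    · exact ENNReal.mul_ne_top (hεfin i) (ENNReal.mul_ne_top hS
        (ENNReal.mul_ne_top (ENNReal.add_ne_top.mpr ⟨hδfin i, hW⟩) hGn))
    · exact ENNReal.mul_ne_top hV (ENNReal.mul_ne_top hS (ENNReal.mul_ne_top (hδfin i) hGn))
  -- Pointwise bound on the difference of integrals
  have hbound : ∀ i,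
      |(∫ x, vi i x * (inner ℝ (Ai i x (wi i x)) (g x) : ℝ) ∂μ) -
        (∫ x, v x * (inner ℝ (Ai i x (w x)) (g x) : ℝ) ∂μ)| ≤ (R i).toReal := by
    intro i
    have intF : Integrable (fun x => vi i x * (inner ℝ (Ai i x (wi i x)) (g x) : ℝ)) μ :=
      integrable_quad (hvi i) (hAi i) (hwi i) hg
    have intG : Integrable (fun x => v x * (inner ℝ (Ai i x (w x)) (g x) : ℝ)) μ :=
      integrable_quad hv (hAi i) hw hg
    rw [← integral_sub intF intG]
    have hsplit : (fun x => vi i x * (inner ℝ (Ai i x (wi i x)) (g x) : ℝ) -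
        v x * (inner ℝ (Ai i x (w x)) (g x) : ℝ)) =
        fun x => (vi i x - v x) * (inner ℝ (Ai i x (wi i x)) (g x) : ℝ) +
          v x * (inner ℝ (Ai i x (wi i x - w x)) (g x) : ℝ) := by
      funext x
      rw [map_sub, inner_sub_left]
      ring
    have haesm1 : AEStronglyMeasurable
        (fun x => (vi i x - v x) * (inner ℝ (Ai i x (wi i x)) (g x) : ℝ)) μ :=
      aesm_quad ((hvi i).sub hv).1 (hAi i).1 (hwi i).1 hg.1
    have haesm2 : AEStronglyMeasurable
        (fun x => v x * (inner ℝ (Ai i x (wi i x - w x)) (g x) : ℝ)) μ :=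
      aesm_quad hv.1 (hAi i).1 ((hwi i).sub hw).1 hg.1
    have hwin : eLpNorm (wi i) 6 μ ≤ δ i + W := by
      have : wi i = fun x => (wi i x - w x) + w x := by funext x; abel
      rw [this]
      exact eLpNorm_add_le ((hwi i).sub hw).1 hw.1 (by norm_num)
    have h1 : eLpNorm (fun x => (vi i x - v x) * (inner ℝ (Ai i x (wi i x)) (g x) : ℝ)) 1 μ ≤
        ε i * (S * ((δ i + W) * Gn)) := by
      refine (quad_bound ((hvi i).sub hv).1 (hAi i).1 (hwi i).1 hg.1).trans ?_
      exact mul_le_mul' le_rfl (mul_le_mul' (hSi i) (mul_le_mul' hwin le_rfl))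
    have h2 : eLpNorm (fun x => v x * (inner ℝ (Ai i x (wi i x - w x)) (g x) : ℝ)) 1 μ ≤
        V * (S * (δ i * Gn)) := by
      refine (quad_bound hv.1 (hAi i).1 ((hwi i).sub hw).1 hg.1).trans ?_
      exact mul_le_mul' le_rfl (mul_le_mul' (hSi i) le_rfl)
    have hL1 : eLpNorm (fun x => vi i x * (inner ℝ (Ai i x (wi i x)) (g x) : ℝ) -
        v x * (inner ℝ (Ai i x (w x)) (g x) : ℝ)) 1 μ ≤ R i := by
      rw [hsplit]
      refine le_trans ?_ (add_le_add h1 h2)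
      exact eLpNorm_add_le haesm1 haesm2 le_rfl
    have hinteg : Integrable (fun x => vi i x * (inner ℝ (Ai i x (wi i x)) (g x) : ℝ) -
        v x * (inner ℝ (Ai i x (w x)) (g x) : ℝ)) μ := intF.sub intG
    rw [← Real.norm_eq_abs]
    calc ‖∫ x, (vi i x * (inner ℝ (Ai i x (wi i x)) (g x) : ℝ) -
            v x * (inner ℝ (Ai i x (w x)) (g x) : ℝ)) ∂μ‖
        ≤ ∫ x, ‖vi i x * (inner ℝ (Ai i x (wi i x)) (g x) : ℝ) -
            v x * (inner ℝ (Ai i x (w x)) (g x) : ℝ)‖ ∂μ := norm_integral_le_integral_norm _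
      _ = (eLpNorm (fun x => vi i x * (inner ℝ (Ai i x (wi i x)) (g x) : ℝ) -
            v x * (inner ℝ (Ai i x (w x)) (g x) : ℝ)) 1 μ).toReal := by
          rw [integral_norm_eq_lintegral_enorm hinteg.1,
            eLpNorm_one_eq_lintegral_enorm]
      _ ≤ (R i).toReal := ENNReal.toReal_mono (hRfin i) hL1
  -- R i → 0
  have hε0 : Tendsto ε atTop (nhds 0) := hvconv
  have hδ0 : Tendsto δ atTop (nhds 0) := hwconv
  have hR0 : Tendsto R atTop (nhds 0) := by
    have ht1 : Tendsto (fun i => ε i * (S * ((δ i + W) * Gn))) atTop (nhds 0) := by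
      have hinner : Tendsto (fun i => S * ((δ i + W) * Gn)) atTop (nhds (S * ((0 + W) * Gn))) := by
        refine ENNReal.Tendsto.const_mul ?_ ?_
        · exact ENNReal.Tendsto.mul_const (hδ0.add tendsto_const_nhds)
            (Or.inr hGn)
        · right; exact hS
      have hfin : S * ((0 + W) * Gn) ≠ ⊤ := ENNReal.mul_ne_top hS (ENNReal.mul_ne_top
          (ENNReal.add_ne_top.mpr ⟨by simp, hW⟩) hGn)
      have := ENNReal.Tendsto.mul hε0 (Or.inr hfin) hinner (Or.inr (by simp))
      simpa using this
    have ht2 : Tendsto (fun i => V * (S * (δ i * Gn))) atTop (nhds 0) := by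
      have h1 : Tendsto (fun i => δ i * Gn) atTop (nhds 0) := by
        simpa using ENNReal.Tendsto.mul_const hδ0 (Or.inr hGn)
      have h2 : Tendsto (fun i => S * (δ i * Gn)) atTop (nhds 0) := by
        simpa using ENNReal.Tendsto.const_mul h1 (Or.inr hS)
      simpa using ENNReal.Tendsto.const_mul h2 (Or.inr hV)
    simpa using ht1.add ht2
  have hRt0 : Tendsto (fun i => (R i).toReal) atTop (nhds 0) := by
    have := (ENNReal.tendsto_toReal (by simp)).comp hR0
    exact this
  -- conclude via squeeze
  have hdiff : Tendsto (fun i => (∫ x, vi i x * (inner ℝ (Ai i x (wi i x)) (g x) : ℝ) ∂μ) -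
      (∫ x, v x * (inner ℝ (Ai i x (w x)) (g x) : ℝ) ∂μ)) atTop (nhds 0) :=
    squeeze_zero_norm hbound hRt0
  have := hdiff.add hG
  simpa using this
end
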